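/- Let G = (V,E) be a finite simple graph and let k ≤ |V|. Construct graph H with two connected components: G' obtained from G by adding three new mutually adjacent vertices v₁, v₂, v₃ each adjacent to every vertex of V, and G'' a disjoint clique on |V| vertices. Then H has a harmonious coloring with 2|V| + 3 − k colors if and only if G has an independent set of size k. -/

import Mathlib

/-- A coloring `c` is harmonious for `G` if it is a proper vertex coloring and
every unordered pair of colors appears on the endpoints of at most one edge. -/
def IsHarmonious {V α : Type*} (G : SimpleGraph V) (c : V → α) : Prop :=
  (∀ ⦃u v : V⦄, G.Adj u v → c u ≠ c v) ∧
  ∀ e ∈ G.edgeSet, ∀ e' ∈ G.edgeSet, Sym2.map c e = Sym2.map c e' → e = e'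

/-- The harmonious chromatic number: the least `k` such that `G` admits a
harmonious coloring with `k` colors. -/
noncomputable def harmoniousChromaticNumber {V : Type*} [Fintype V] (G : SimpleGraph V) : ℕ :=
  sInf {k | ∃ c : V → Fin k, IsHarmonious G c}


/-- The two-component graph of the reduction: the first component is `G`
together with three new mutually adjacent vertices, each adjacent to every
vertex of `G`; the second component is a clique on a disjoint copy of `V`. -/
def reductionGraph {V : Type*} (G : SimpleGraph V) :
    SimpleGraph (V ⊕ (Fin 3 ⊕ V)) :=
  SimpleGraph.fromRel (fun x y =>
    match x, y with
    | .inl a, .inl b => G.Adj a b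
    | .inl _, .inr (.inl _) => True
    | .inr (.inl _), .inr (.inl _) => True
    | .inr (.inr _), .inr (.inr _) => True
    | _, _ => False)

section Aux

variable {V : Type*} {G : SimpleGraph V}

lemma adj_inl_inl {a b : V} : (reductionGraph G).Adj (.inl a) (.inl b) ↔ G.Adj a b := by
  simp only [reductionGraph, SimpleGraph.fromRel_adj]
  constructor
  · rintro ⟨-, h | h⟩; exact h; exact h.symm
  · exact fun h => ⟨by simpa using h.ne, Or.inl h⟩

lemma adj_inl_mid (a : V) (i : Fin 3) : (reductionGraph G).Adj (.inl a) (.inr (.inl i)) := by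
  simp [reductionGraph, SimpleGraph.fromRel_adj]

lemma adj_mid_mid {i j : Fin 3} (h : i ≠ j) :
    (reductionGraph G).Adj (.inr (.inl i)) (.inr (.inl j)) := by
  simp [reductionGraph, SimpleGraph.fromRel_adj, h]

lemma adj_clique {u v : V} (h : u ≠ v) :
    (reductionGraph G).Adj (.inr (.inr u)) (.inr (.inr v)) := by
  simp [reductionGraph, SimpleGraph.fromRel_adj, h]

/-- The component indicator: `true` for the `G'` component, `false` for the clique. -/
def comp : V ⊕ (Fin 3 ⊕ V) → Bool :=
  Sum.elim (fun _ => true) (Sum.elim (fun _ => true) (fun _ => false))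

lemma adj_comp {x y : V ⊕ (Fin 3 ⊕ V)} (h : (reductionGraph G).Adj x y) : comp x = comp y := by
  rcases x with u | i | u <;> rcases y with v | j | v <;>
    simp_all [reductionGraph, SimpleGraph.fromRel_adj, comp]

/-- Embedding of the `G'` component's vertex set. -/
def emb1 : V ⊕ Fin 3 → V ⊕ (Fin 3 ⊕ V) := Sum.elim Sum.inl (fun i => .inr (.inl i))

end Aux

noncomputable def cnat {V : Type*} [Fintype V] [DecidableEq V] (s : Finset V) :
    V ⊕ (Fin 3 ⊕ V) → ℕ
  | .inl u => Fintype.equivFin V u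
  | .inr (.inl i) => Fintype.card V + i
  | .inr (.inr u) =>
      if h : u ∈ s then Fintype.equivFin V u
      else Fintype.card V + 3 + (sᶜ.equivFin ⟨u, Finset.mem_compl.2 h⟩ : Fin _)

section CNat

variable {V : Type*} [Fintype V] [DecidableEq V] (s : Finset V)

lemma cnat_lt (x : V ⊕ (Fin 3 ⊕ V)) : cnat s x < 2 * Fintype.card V + 3 - s.card := by
  have hsn : s.card ≤ Fintype.card V := Finset.card_le_univ s
  rcases x with u | i | u
  · have := (Fintype.equivFin V u).2; simp only [cnat]; omega
  · have := i.2; simp only [cnat]; omega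
  · simp only [cnat]
    by_cases h : u ∈ s
    · rw [dif_pos h]; have := (Fintype.equivFin V u).2; omega
    · rw [dif_neg h]
      have h2 := (sᶜ.equivFin ⟨u, Finset.mem_compl.2 h⟩).2
      have h3 : sᶜ.card = Fintype.card V - s.card := Finset.card_compl s
      omega

lemma cnat_collision {x y : V ⊕ (Fin 3 ⊕ V)} (h : cnat s x = cnat s y) :
    x = y ∨ ∃ t ∈ s, (x = .inl t ∧ y = .inr (.inr t)) ∨ (x = .inr (.inr t) ∧ y = .inl t) := by
  have einj : Function.Injective (Fintype.equivFin V) := (Fintype.equivFin V).injective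
  rcases x with u | i | u <;> rcases y with v | j | v <;> simp only [cnat] at h
  · left; rw [einj (Fin.ext h)]
  · have := (Fintype.equivFin V u).2; omega
  · by_cases hv : v ∈ s
    · rw [dif_pos hv] at h
      right; exact ⟨v, hv, Or.inl ⟨by rw [einj (Fin.ext h)], rfl⟩⟩
    · rw [dif_neg hv] at h; have := (Fintype.equivFin V u).2; omega
  · have := (Fintype.equivFin V v).2; omega
  · left; have : i = j := Fin.ext (by omega); rw [this]
  · by_cases hv : v ∈ s
    · rw [dif_pos hv] at h; have := (Fintype.equivFin V v).2; have := i.2; omega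
    · rw [dif_neg hv] at h; have := i.2; omega
  · by_cases hu : u ∈ s
    · rw [dif_pos hu] at h
      right; exact ⟨u, hu, Or.inr ⟨rfl, by rw [einj (Fin.ext h)]⟩⟩
    · rw [dif_neg hu] at h; have := (Fintype.equivFin V v).2; omega
  · by_cases hu : u ∈ s
    · rw [dif_pos hu] at h; have := (Fintype.equivFin V u).2; have := j.2; omega
    · rw [dif_neg hu] at h; have := j.2; omega
  · by_cases hu : u ∈ s <;> by_cases hv : v ∈ s
    · rw [dif_pos hu, dif_pos hv] at h; left; rw [einj (Fin.ext h)]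
    · rw [dif_pos hu, dif_neg hv] at h; have := (Fintype.equivFin V u).2; omega
    · rw [dif_neg hu, dif_pos hv] at h; have := (Fintype.equivFin V v).2; omega
    · rw [dif_neg hu, dif_neg hv] at h
      left
      have : (⟨u, Finset.mem_compl.2 hu⟩ : {x // x ∈ sᶜ}) = ⟨v, Finset.mem_compl.2 hv⟩ :=
        sᶜ.equivFin.injective (Fin.ext (by omega))
      simp at this; rw [this]

end CNat

theorem harmonious_reduction_iff_independent_set {V : Type*} [Fintype V]
    (G : SimpleGraph V) (k : ℕ) (hk : k ≤ Fintype.card V) :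
    (∃ c : (V ⊕ (Fin 3 ⊕ V)) → Fin (2 * Fintype.card V + 3 - k),
        IsHarmonious (reductionGraph G) c) ↔
    (∃ s : Finset V, s.card = k ∧ ∀ a ∈ s, ∀ b ∈ s, ¬ G.Adj a b) := by
  classical
  constructor
  · rintro ⟨c, hcp, hcu⟩
    rcases Nat.lt_or_ge k 2 with hk2 | hk2
    · -- trivial small cases
      interval_cases k
      · exact ⟨∅, Finset.card_empty, by simp⟩
      · have : Nonempty V := Fintype.card_pos_iff.1 (by omega)
        obtain ⟨v⟩ := this
        refine ⟨{v}, Finset.card_singleton v, ?_⟩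
        intro a ha b hb
        simp only [Finset.mem_singleton] at ha hb
        subst ha; subst hb
        exact G.irrefl
    · have hinj1 : Function.Injective (fun w : V ⊕ Fin 3 => c (emb1 w)) := by
        intro x y hxy
        by_contra hne
        have hadj_or : (reductionGraph G).Adj (emb1 x) (emb1 y) ∨
            ∃ u v : V, u ≠ v ∧ x = .inl u ∧ y = .inl v ∧ ¬ G.Adj u v := by
          rcases x with u | i <;> rcases y with v | j
          · by_cases hG : G.Adj u v
            · exact Or.inl (adj_inl_inl.2 hG)
            · exact Or.inr ⟨u, v, fun h => hne (by rw [h]), rfl, rfl, hG⟩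
          · exact Or.inl (adj_inl_mid u j)
          · exact Or.inl (adj_inl_mid v i).symm
          · exact Or.inl (adj_mid_mid (fun h => hne (by rw [h])))
        rcases hadj_or with hadj | ⟨u, v, huv, rfl, rfl, hG⟩
        · exact hcp hadj hxy
        · have e1 : s(Sum.inr (Sum.inl 0), Sum.inl u) ∈ (reductionGraph G).edgeSet :=
            (SimpleGraph.mem_edgeSet _).2 (adj_inl_mid u 0).symm
          have e2 : s(Sum.inr (Sum.inl 0), Sum.inl v) ∈ (reductionGraph G).edgeSet :=
            (SimpleGraph.mem_edgeSet _).2 (adj_inl_mid v 0).symm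
          have heq := hcu _ e1 _ e2 (by
            rw [Sym2.map_pair_eq, Sym2.map_pair_eq]
            have : c (Sum.inl u) = c (Sum.inl v) := hxy
            rw [this])
          have := Sym2.congr_right.1 heq
          exact huv (Sum.inl.inj this)
      have hinj2 : Function.Injective (fun u : V => c (.inr (.inr u))) := by
        intro u v h
        by_contra hne
        exact hcp (adj_clique hne) h
      let A : Finset (Fin (2 * Fintype.card V + 3 - k)) :=
        Finset.univ.image (fun w : V ⊕ Fin 3 => c (emb1 w))
      let B : Finset (Fin (2 * Fintype.card V + 3 - k)) :=
        Finset.univ.image (fun u : V => c (.inr (.inr u)))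
      have hA : A.card = Fintype.card V + 3 := by
        rw [Finset.card_image_of_injective _ hinj1, Finset.card_univ]
        simp
      have hB : B.card = Fintype.card V := by
        rw [Finset.card_image_of_injective _ hinj2, Finset.card_univ]
      have hU : (A ∪ B).card ≤ 2 * Fintype.card V + 3 - k :=
        le_trans (Finset.card_le_univ _) (by simp)
      have hI : k ≤ (A ∩ B).card := by
        have := Finset.card_union_add_card_inter A B
        omega
      let W : Finset (V ⊕ Fin 3) := Finset.univ.filter (fun w => c (emb1 w) ∈ A ∩ B)
      have hWimg : A ∩ B = W.image (fun w => c (emb1 w)) := by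
        ext x
        constructor
        · intro hx
          obtain ⟨w, -, hw⟩ := Finset.mem_image.1 (Finset.mem_inter.1 hx).1
          exact Finset.mem_image.2 ⟨w, Finset.mem_filter.2 ⟨Finset.mem_univ _, hw ▸ hx⟩, hw⟩
        · intro hx
          obtain ⟨w, hw, rfl⟩ := Finset.mem_image.1 hx
          exact (Finset.mem_filter.1 hw).2
      have hW : k ≤ W.card := by
        rw [hWimg] at hI
        exact hI.trans Finset.card_image_le
      have hWnadj : ∀ w ∈ W, ∀ w' ∈ W, w ≠ w' →
          ¬ (reductionGraph G).Adj (emb1 w) (emb1 w') := by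
        intro w hw w' hw' hne hadj
        have hB1 : c (emb1 w) ∈ B := (Finset.mem_inter.1 (Finset.mem_filter.1 hw).2).2
        have hB2 : c (emb1 w') ∈ B := (Finset.mem_inter.1 (Finset.mem_filter.1 hw').2).2
        obtain ⟨u, -, hu⟩ := Finset.mem_image.1 hB1
        obtain ⟨v, -, hv⟩ := Finset.mem_image.1 hB2
        have huv : u ≠ v := by
          rintro rfl
          exact hne (hinj1 (hu.symm.trans hv))
        have e1 : s(emb1 w, emb1 w') ∈ (reductionGraph G).edgeSet :=
          (SimpleGraph.mem_edgeSet _).2 hadj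
        have e2 : s(Sum.inr (Sum.inr u), Sum.inr (Sum.inr v)) ∈ (reductionGraph G).edgeSet :=
          (SimpleGraph.mem_edgeSet _).2 (adj_clique huv)
        have heq := hcu _ e1 _ e2 (by
          rw [Sym2.map_pair_eq, Sym2.map_pair_eq, hu, hv])
        have : emb1 w = Sum.inr (Sum.inr u) ∨ emb1 w = Sum.inr (Sum.inr v) := by
          rcases Sym2.eq_iff.1 heq with ⟨h, -⟩ | ⟨h, -⟩
          exacts [Or.inl h, Or.inr h]
        rcases w with a | i <;> rcases this with h | h <;> simp [emb1] at h
      have hWinl : ∀ w ∈ W, ∃ u, w = Sum.inl u := by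
        rintro (u | i) hw
        · exact ⟨u, rfl⟩
        · exfalso
          obtain ⟨w', hw', hne⟩ :=
            Finset.exists_mem_ne (lt_of_lt_of_le (by omega) hW) (Sum.inr i)
          refine hWnadj _ hw' _ hw hne ?_
          rcases w' with u | j
          · exact adj_inl_mid u i
          · exact adj_mid_mid (fun h => hne (by rw [h]))
      let W' : Finset V := Finset.univ.filter (fun u => Sum.inl u ∈ W)
      have hWsub : W ⊆ W'.image Sum.inl := by
        intro w hw
        obtain ⟨u, rfl⟩ := hWinl w hw
        exact Finset.mem_image.2 ⟨u, Finset.mem_filter.2 ⟨Finset.mem_univ _, hw⟩, rfl⟩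
      have hW' : k ≤ W'.card :=
        le_trans (le_trans hW (Finset.card_le_card hWsub)) Finset.card_image_le
      obtain ⟨t, hts, htc⟩ := Finset.exists_subset_card_eq hW'
      refine ⟨t, htc, fun a ha b hb hab => ?_⟩
      have ha' : Sum.inl a ∈ W := (Finset.mem_filter.1 (hts ha)).2
      have hb' : Sum.inl b ∈ W := (Finset.mem_filter.1 (hts hb)).2
      exact hWnadj _ ha' _ hb' (fun h => hab.ne (Sum.inl.inj h)) (adj_inl_inl.2 hab)
  · rintro ⟨s, hcard, hind⟩
    refine ⟨fun x => ⟨cnat s x, by rw [← hcard]; exact cnat_lt s x⟩, ?_, ?_⟩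
    · intro u v hadj heq
      have h : cnat s u = cnat s v := congrArg Fin.val heq
      rcases cnat_collision s h with rfl | ⟨t, ht, ⟨rfl, rfl⟩ | ⟨rfl, rfl⟩⟩
      · exact (reductionGraph G).irrefl hadj
      · exact absurd (adj_comp hadj) (by simp [comp])
      · exact absurd (adj_comp hadj) (by simp [comp])
    · have main : ∀ a b a' b', (reductionGraph G).Adj a b → (reductionGraph G).Adj a' b' →
          cnat s a = cnat s a' → cnat s b = cnat s b' → s(a, b) = s(a', b') := by
        intro a b a' b' hab ha'b' h1 h2
        rcases cnat_collision s h1 with rfl | ⟨t, ht, ⟨rfl, rfl⟩ | ⟨rfl, rfl⟩⟩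
        · rcases cnat_collision s h2 with rfl | ⟨t, ht, ⟨rfl, rfl⟩ | ⟨rfl, rfl⟩⟩
          · rfl
          · exact absurd ((adj_comp hab).symm.trans (adj_comp ha'b')) (by simp [comp])
          · exact absurd ((adj_comp hab).symm.trans (adj_comp ha'b')) (by simp [comp])
        · rcases cnat_collision s h2 with rfl | ⟨t', ht', ⟨rfl, rfl⟩ | ⟨rfl, rfl⟩⟩
          · exact absurd ((adj_comp hab).trans (adj_comp ha'b').symm) (by simp [comp])
          · exact absurd (adj_inl_inl.1 hab) (hind t ht t' ht')
          · exact absurd (adj_comp hab) (by simp [comp])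
        · rcases cnat_collision s h2 with rfl | ⟨t', ht', ⟨rfl, rfl⟩ | ⟨rfl, rfl⟩⟩
          · exact absurd ((adj_comp hab).trans (adj_comp ha'b').symm) (by simp [comp])
          · exact absurd (adj_comp hab) (by simp [comp])
          · exact absurd (adj_inl_inl.1 ha'b') (hind t ht t' ht')
      intro e
      induction e using Sym2.ind with
      | _ a b =>
        intro hab e'
        induction e' using Sym2.ind with
        | _ a' b' =>
          intro ha'b' hmap
          rw [SimpleGraph.mem_edgeSet] at hab ha'b'
          rw [Sym2.map_pair_eq, Sym2.map_pair_eq, Sym2.eq_iff] at hmap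
          rcases hmap with ⟨h1, h2⟩ | ⟨h1, h2⟩
          · exact main a b a' b' hab ha'b' (congrArg Fin.val h1) (congrArg Fin.val h2)
          · exact (main a b b' a' hab ha'b'.symm (congrArg Fin.val h1)
              (congrArg Fin.val h2)).trans Sym2.eq_swap
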